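/- Let q, x, y be complex numbers with |q| < 1 such that x²y q^{2n+2} ≠ 1 for every integer n ≥ 0 and x ≠ 1. Then (−x;q)_∞ (xy;q)_∞ / (x²yq²;q²)_∞ = Σ_{n ≥ 0} xⁿ q^{C(n,2)} (1 − x²y² q^{4n}) (xy;q)_n (y;q²)_n / ((q;q)_n (x²yq²;q²)_n). -/

import Mathlib

/-- The finite q-Pochhammer symbol `(a; q)_n = ∏_{k=0}^{n-1} (1 - a q^k)`. -/
noncomputable def qPoch (a q : ℂ) (n : ℕ) : ℂ :=
  ∏ k ∈ Finset.range n, (1 - a * q ^ k)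

/-- The infinite q-Pochhammer symbol `(a; q)_∞ = ∏_{k=0}^{∞} (1 - a q^k)`. -/
noncomputable def qPochInf (a q : ℂ) : ℂ :=
  ∏' k : ℕ, (1 - a * q ^ k)

open Filter Finset Complex Topology

lemma qPoch_succ (a q : ℂ) (n : ℕ) : qPoch a q (n+1) = qPoch a q n * (1 - a * q ^ n) :=
  Finset.prod_range_succ _ _

lemma qPoch_shift (a q : ℂ) (n : ℕ) : qPoch a q (n+1) = (1 - a) * qPoch (a*q) q n := by
  rw [qPoch, Finset.prod_range_succ']
  simp only [pow_zero, mul_one, pow_succ']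
  rw [mul_comm]
  congr 1
  apply Finset.prod_congr rfl
  intro k _
  ring_nf

lemma qPoch_ne_zero (a q : ℂ) (n : ℕ) (h : ∀ k : ℕ, 1 - a * q ^ k ≠ 0) :
    qPoch a q n ≠ 0 :=
  Finset.prod_ne_zero_iff.2 fun k _ => h k

lemma geom_partial_le (r : ℝ) (h0 : 0 ≤ r) (h1 : r < 1) (n : ℕ) :
    ∑ k ∈ Finset.range n, r ^ k ≤ (1 - r)⁻¹ := by
  have := Summable.sum_le_tsum (Finset.range n) (fun k _ => pow_nonneg h0 k)
    (summable_geometric_of_lt_one h0 h1)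
  rwa [tsum_geometric_of_lt_one h0 h1] at this

lemma norm_qPoch_le (a q : ℂ) (c : ℝ) (hq : ‖q‖ < 1) (hc : ‖a‖ ≤ c) (n : ℕ) :
    ‖qPoch a q n‖ ≤ Real.exp (c / (1 - ‖q‖)) := by
  have hc0 : 0 ≤ c := le_trans (norm_nonneg a) hc
  have h1 : ‖qPoch a q n‖ ≤ ∏ k ∈ Finset.range n, Real.exp (c * ‖q‖ ^ k) := by
    rw [qPoch]
    refine le_trans (norm_prod_le _ _) (Finset.prod_le_prod (fun k _ => norm_nonneg _) ?_)
    intro k _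
    calc ‖1 - a * q ^ k‖ ≤ ‖(1:ℂ)‖ + ‖a * q ^ k‖ := norm_sub_le _ _
    _ = 1 + ‖a‖ * ‖q‖ ^ k := by rw [norm_one, norm_mul, norm_pow]
    _ ≤ 1 + c * ‖q‖ ^ k := by
        have : ‖a‖ * ‖q‖ ^ k ≤ c * ‖q‖ ^ k :=
          mul_le_mul_of_nonneg_right hc (pow_nonneg (norm_nonneg q) k)
        linarith
    _ ≤ Real.exp (c * ‖q‖ ^ k) := by
        have := Real.add_one_le_exp (c * ‖q‖ ^ k); linarith
  rw [← Real.exp_sum] at h1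
  refine le_trans h1 (Real.exp_le_exp.2 ?_)
  rw [← Finset.mul_sum, div_eq_mul_inv]
  exact mul_le_mul_of_nonneg_left (geom_partial_le _ (norm_nonneg q) hq n) hc0

lemma one_sub_sum_le_prod (n : ℕ) (f : ℕ → ℝ) (h0 : ∀ k, 0 ≤ f k) (h1 : ∀ k, f k ≤ 1) :
    1 - ∑ k ∈ Finset.range n, f k ≤ ∏ k ∈ Finset.range n, (1 - f k) := by
  induction n with
  | zero => simp
  | succ n ih =>
    rw [Finset.sum_range_succ, Finset.prod_range_succ]
    have hp : 0 ≤ ∏ k ∈ Finset.range n, (1 - f k) :=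
      Finset.prod_nonneg fun k _ => by linarith [h1 k]
    have hp1 : ∏ k ∈ Finset.range n, (1 - f k) ≤ 1 :=
      Finset.prod_le_one (fun k _ => by linarith [h1 k]) (fun k _ => by linarith [h0 k])
    nlinarith [ih, h0 n, h1 n]

lemma norm_qPoch_ge (a q : ℂ) (hq : ‖q‖ < 1) (ha : ‖a‖ ≤ (1 - ‖q‖)/2) (n : ℕ) :
    (1:ℝ)/2 ≤ ‖qPoch a q n‖ := by
  have hq0 := norm_nonneg q
  have ha0 := norm_nonneg a
  have hfk1 : ∀ k : ℕ, ‖a‖ * ‖q‖ ^ k ≤ 1 := by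
    intro k
    have : ‖q‖ ^ k ≤ 1 := pow_le_one₀ hq0 hq.le
    nlinarith
  have h2 : ∏ k ∈ Finset.range n, (1 - ‖a‖ * ‖q‖ ^ k) ≤ ‖qPoch a q n‖ := by
    rw [qPoch, norm_prod]
    refine Finset.prod_le_prod (fun k _ => by nlinarith [hfk1 k, mul_nonneg ha0 (pow_nonneg hq0 k)]) ?_
    intro k _
    calc 1 - ‖a‖ * ‖q‖ ^ k = ‖(1:ℂ)‖ - ‖a * q ^ k‖ := by rw [norm_one, norm_mul, norm_pow]
    _ ≤ ‖1 - a * q ^ k‖ := norm_sub_norm_le _ _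
  have h3 : 1 - ∑ k ∈ Finset.range n, ‖a‖ * ‖q‖ ^ k ≤ ∏ k ∈ Finset.range n, (1 - ‖a‖ * ‖q‖ ^ k) :=
    one_sub_sum_le_prod n _ (fun k => mul_nonneg ha0 (pow_nonneg hq0 k)) hfk1
  have h4 : ∑ k ∈ Finset.range n, ‖a‖ * ‖q‖ ^ k ≤ 1/2 := by
    rw [← Finset.mul_sum]
    have := geom_partial_le ‖q‖ hq0 hq n
    have h5 : ‖a‖ * ∑ k ∈ Finset.range n, ‖q‖ ^ k ≤ ((1-‖q‖)/2) * (1-‖q‖)⁻¹ := by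
      apply mul_le_mul ha this (Finset.sum_nonneg fun k _ => pow_nonneg hq0 k) (by linarith)
    have hne : (1:ℝ) - ‖q‖ ≠ 0 := by linarith
    have h6 : ((1-‖q‖)/2) * (1-‖q‖)⁻¹ = 1/2 := by
      rw [div_mul_eq_mul_div, mul_inv_cancel₀ hne]
    linarith [h5, h6.le, h6.ge]
  linarith

lemma summable_log_qp (a q : ℂ) (hq : ‖q‖ < 1) (ha : ‖a‖ ≤ 1/2) :
    Summable fun k : ℕ => Complex.log (1 - a * q ^ k) := by
  apply Summable.of_norm_bounded (g := fun k => 3/2 * (‖a‖ * ‖q‖ ^ k))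
  · exact ((summable_geometric_of_lt_one (norm_nonneg q) hq).mul_left ‖a‖).mul_left _
  · intro k
    have hk : ‖-(a * q ^ k)‖ ≤ 1/2 := by
      rw [norm_neg, norm_mul, norm_pow]
      calc ‖a‖ * ‖q‖^k ≤ ‖a‖ * 1 := by
            exact mul_le_mul_of_nonneg_left (pow_le_one₀ (norm_nonneg q) hq.le) (norm_nonneg a)
      _ ≤ 1/2 := by rwa [mul_one]
    have := Complex.norm_log_one_add_half_le_self hk
    rw [show (1 : ℂ) + -(a * q ^ k) = 1 - a * q ^ k by ring] at this
    rw [norm_neg, norm_mul, norm_pow] at this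
    exact this

lemma factor_ne_zero (a q : ℂ) (hq : ‖q‖ < 1) (ha : ‖a‖ < 1) (k : ℕ) : 1 - a * q ^ k ≠ 0 := by
  intro h
  have h1 : (1:ℂ) = a * q ^ k := sub_eq_zero.1 h
  have h2 : (1:ℝ) = ‖a‖ * ‖q‖^k := by
    calc (1:ℝ) = ‖(1:ℂ)‖ := norm_one.symm
    _ = ‖a * q ^ k‖ := by rw [← h1]
    _ = ‖a‖ * ‖q‖^k := by rw [norm_mul, norm_pow]
  have h3 : ‖a‖ * ‖q‖^k ≤ ‖a‖ * 1 :=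
    mul_le_mul_of_nonneg_left (pow_le_one₀ (norm_nonneg q) hq.le) (norm_nonneg a)
  nlinarith

lemma hasProd_qp (a q : ℂ) (hq : ‖q‖ < 1) (ha : ‖a‖ ≤ 1/2) :
    HasProd (fun k : ℕ => 1 - a * q ^ k)
      (Complex.exp (∑' k : ℕ, Complex.log (1 - a * q ^ k))) := by
  have hs := (summable_log_qp a q hq ha).hasSum
  have hfun : (fun k : ℕ => 1 - a * q ^ k)
      = fun k : ℕ => Complex.exp (Complex.log (1 - a * q ^ k)) :=
    funext fun k => (Complex.exp_log (factor_ne_zero a q hq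
      (lt_of_le_of_lt ha (by norm_num)) k)).symm
  rw [hfun]
  exact hs.cexp

lemma qPochInf_eq_exp (a q : ℂ) (hq : ‖q‖ < 1) (ha : ‖a‖ ≤ 1/2) :
    qPochInf a q = Complex.exp (∑' k : ℕ, Complex.log (1 - a * q ^ k)) :=
  (hasProd_qp a q hq ha).tprod_eq

lemma norm_mul_pow_tendsto (c q : ℂ) (hq : ‖q‖ < 1) :
    Tendsto (fun n : ℕ => ‖c * q ^ n‖) atTop (𝓝 0) := by
  have := (tendsto_pow_atTop_nhds_zero_of_norm_lt_one hq).norm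
  simp only [norm_zero] at this
  have h3 : Tendsto (fun n : ℕ => ‖c‖ * ‖q ^ n‖) atTop (𝓝 (‖c‖ * 0)) := this.const_mul _
  rw [mul_zero] at h3
  refine h3.congr fun n => (norm_mul _ _).symm

lemma exists_small (a q : ℂ) (hq : ‖q‖ < 1) : ∃ N : ℕ, ‖a * q ^ N‖ ≤ 1/2 :=
  ((norm_mul_pow_tendsto a q hq).eventually
    (eventually_le_nhds (by norm_num : (0:ℝ) < 1/2))).exists

lemma multipliable_qp (a q : ℂ) (hq : ‖q‖ < 1) :
    Multipliable fun k : ℕ => 1 - a * q ^ k := by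
  obtain ⟨N, hN⟩ := exists_small a q hq
  have h := (hasProd_qp (a * q ^ N) q hq hN).multipliable
  have h2 : Multipliable fun n : ℕ => 1 - a * q ^ (n + N) := by
    apply h.congr
    intro k
    rw [mul_assoc, ← pow_add, add_comm N k]
  exact Multipliable.comp_nat_add (f := fun k : ℕ => 1 - a * q ^ k) (k := N) h2

lemma qPochInf_shift (a q : ℂ) (hq : ‖q‖ < 1) :
    qPochInf a q = (1 - a) * qPochInf (a * q) q := by
  have hm : Multipliable fun n : ℕ => 1 - a * q ^ (n + 1) := by
    apply (multipliable_qp (a*q) q hq).congr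
    intro k
    rw [mul_assoc, ← pow_succ']
  rw [qPochInf, tprod_eq_zero_mul' (f := fun k : ℕ => 1 - a * q ^ k) hm]
  congr 1
  · simp
  · rw [qPochInf]
    apply tprod_congr
    intro k
    rw [mul_assoc, ← pow_succ']

lemma qPochInf_split (a q : ℂ) (hq : ‖q‖ < 1) (N : ℕ) :
    qPochInf a q = qPoch a q N * qPochInf (a * q ^ N) q := by
  induction N with
  | zero => simp [qPoch]
  | succ n ih =>
    rw [ih, qPochInf_shift (a * q ^ n) q hq, qPoch_succ]
    have harg : a * q ^ n * q = a * q ^ (n + 1) := by rw [pow_succ]; ring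
    rw [harg]
    ring

lemma qPochInf_ne_zero (a q : ℂ) (hq : ‖q‖ < 1) (h : ∀ k : ℕ, 1 - a * q ^ k ≠ 0) :
    qPochInf a q ≠ 0 := by
  obtain ⟨N, hN⟩ := exists_small a q hq
  rw [qPochInf_split a q hq N]
  apply mul_ne_zero
  · exact qPoch_ne_zero a q N h
  · rw [qPochInf_eq_exp _ q hq hN]
    exact Complex.exp_ne_zero _

lemma norm_tsum_log_le (a q : ℂ) (hq : ‖q‖ < 1) (ha : ‖a‖ ≤ 1/2) :
    ‖∑' k : ℕ, Complex.log (1 - a * q ^ k)‖ ≤ 3/2 * ‖a‖ * (1 - ‖q‖)⁻¹ := by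
  have hb : ∀ k : ℕ, ‖Complex.log (1 - a * q ^ k)‖ ≤ 3/2 * ‖a‖ * ‖q‖ ^ k := by
    intro k
    have hk : ‖-(a * q ^ k)‖ ≤ 1/2 := by
      rw [norm_neg, norm_mul, norm_pow]
      calc ‖a‖ * ‖q‖^k ≤ ‖a‖ * 1 :=
            mul_le_mul_of_nonneg_left (pow_le_one₀ (norm_nonneg q) hq.le) (norm_nonneg a)
      _ ≤ 1/2 := by rwa [mul_one]
    have := Complex.norm_log_one_add_half_le_self hk
    rw [show (1 : ℂ) + -(a * q ^ k) = 1 - a * q ^ k by ring] at this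
    rw [norm_neg, norm_mul, norm_pow] at this
    calc ‖Complex.log (1 - a * q ^ k)‖ ≤ 3/2 * (‖a‖ * ‖q‖^k) := this
    _ = 3/2 * ‖a‖ * ‖q‖ ^ k := by ring
  have hsb : Summable (fun k : ℕ => 3/2 * ‖a‖ * ‖q‖ ^ k) :=
    (summable_geometric_of_lt_one (norm_nonneg q) hq).mul_left _
  calc ‖∑' k : ℕ, Complex.log (1 - a * q ^ k)‖
      ≤ ∑' k : ℕ, ‖Complex.log (1 - a * q ^ k)‖ :=
        norm_tsum_le_tsum_norm ((summable_log_qp a q hq ha).norm)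
  _ ≤ ∑' k : ℕ, 3/2 * ‖a‖ * ‖q‖ ^ k :=
        Summable.tsum_le_tsum hb ((summable_log_qp a q hq ha).norm) hsb
  _ = 3/2 * ‖a‖ * (1 - ‖q‖)⁻¹ := by
        rw [tsum_mul_left, tsum_geometric_of_lt_one (norm_nonneg q) hq]

lemma qPochInf_tendsto_one (c q : ℂ) (hq : ‖q‖ < 1) :
    Tendsto (fun n : ℕ => qPochInf (c * q ^ n) q) atTop (𝓝 1) := by
  have hnorm := norm_mul_pow_tendsto c q hq
  have hev : ∀ᶠ n in atTop, ‖c * q ^ n‖ ≤ 1/2 :=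
    hnorm.eventually (eventually_le_nhds (by norm_num : (0:ℝ) < 1/2))
  have hS : Tendsto (fun n : ℕ => ∑' k : ℕ, Complex.log (1 - (c * q ^ n) * q ^ k)) atTop (𝓝 0) := by
    rw [tendsto_zero_iff_norm_tendsto_zero]
    apply squeeze_zero' (Eventually.of_forall fun n => norm_nonneg _)
      (hev.mono fun n hn => norm_tsum_log_le (c * q ^ n) q hq hn)
    have : Tendsto (fun n : ℕ => 3/2 * ‖c * q ^ n‖ * (1 - ‖q‖)⁻¹) atTop (𝓝 (3/2 * 0 * (1 - ‖q‖)⁻¹)) :=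
      ((hnorm.const_mul _).mul_const _)
    simpa using this
  have hExp : Tendsto (fun n : ℕ => Complex.exp (∑' k : ℕ, Complex.log (1 - (c * q ^ n) * q ^ k)))
      atTop (𝓝 1) := by
    have := (Complex.continuous_exp.tendsto 0).comp hS
    rw [Complex.exp_zero] at this
    exact this
  apply hExp.congr'
  filter_upwards [hev] with n hn
  exact (qPochInf_eq_exp _ q hq hn).symm

lemma choose_two_succ (n : ℕ) : (n+1).choose 2 = n.choose 2 + n := by
  rw [Nat.choose_succ_succ, Nat.choose_one_right, add_comm]

/-- The summand of the series. -/
noncomputable def trm (q x y : ℂ) (n : ℕ) : ℂ :=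
  x ^ n * q ^ Nat.choose n 2 * (1 - x ^ 2 * y ^ 2 * q ^ (4 * n)) *
    qPoch (x * y) q n * qPoch y (q ^ 2) n /
    (qPoch q q n * qPoch (x ^ 2 * y * q ^ 2) (q ^ 2) n)

/-- The telescoping certificate. -/
noncomputable def crt (q x y : ℂ) (n : ℕ) : ℂ :=
  (1 - q ^ n) * (1 - x ^ 2 * y * q ^ 2) *
    (1 + x * y * (1 - x * q ^ 2) * (q ^ n) ^ 2 - x ^ 3 * y ^ 2 * q ^ 2 * (q ^ n) ^ 4) *
    (x ^ n * q ^ Nat.choose n 2 * qPoch (x * y) q n * qPoch y (q ^ 2) n) /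
    (qPoch q q n * qPoch (x ^ 2 * y * q ^ 2) (q ^ 2) (n + 1))

lemma norm_trm_le (q x y : ℂ) {cq ca Bx Bxy By : ℝ} (hq : ‖q‖ < 1)
    (hcq0 : 0 < cq) (hca0 : 0 < ca)
    (hcq : ∀ m, cq ≤ ‖qPoch q q m‖)
    (hca : ∀ m, ca ≤ ‖qPoch (x ^ 2 * y * q ^ 2) (q ^ 2) m‖)
    (hBx : ‖x‖ ≤ Bx) (hBxy : ‖x * y‖ ≤ Bxy) (hBy : ‖y‖ ≤ By) (n : ℕ) :
    ‖trm q x y n‖ ≤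
      ((1 + Bx ^ 2 * ‖y‖ ^ 2) * Real.exp (Bxy / (1 - ‖q‖)) * Real.exp (By / (1 - ‖q ^ 2‖)) /
        (cq * ca)) * (‖x‖ ^ n * ‖q‖ ^ Nat.choose n 2) := by
  have hq2 : ‖q ^ 2‖ < 1 := by
    rw [norm_pow]
    calc ‖q‖ ^ 2 ≤ ‖q‖ * 1 := by nlinarith [norm_nonneg q]
    _ < 1 := by nlinarith [norm_nonneg q]
  have hB : ‖1 - x ^ 2 * y ^ 2 * q ^ (4 * n)‖ ≤ 1 + Bx ^ 2 * ‖y‖ ^ 2 := by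
    calc ‖1 - x ^ 2 * y ^ 2 * q ^ (4 * n)‖ ≤ ‖(1:ℂ)‖ + ‖x ^ 2 * y ^ 2 * q ^ (4 * n)‖ :=
          norm_sub_le _ _
    _ = 1 + ‖x‖^2 * ‖y‖^2 * ‖q‖^(4*n) := by
          rw [norm_one, norm_mul, norm_mul, norm_pow, norm_pow, norm_pow]
    _ ≤ 1 + Bx ^ 2 * ‖y‖ ^ 2 := by
          have h1 : ‖q‖^(4*n) ≤ 1 := pow_le_one₀ (norm_nonneg q) hq.le
          have h2 : ‖x‖^2 ≤ Bx^2 := by nlinarith [norm_nonneg x]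
          have h3 : ‖x‖^2*‖y‖^2*‖q‖^(4*n) ≤ Bx^2*‖y‖^2 := by
            calc ‖x‖^2*‖y‖^2*‖q‖^(4*n) ≤ ‖x‖^2*‖y‖^2*1 :=
                  mul_le_mul_of_nonneg_left h1 (by positivity)
            _ = ‖x‖^2*‖y‖^2 := mul_one _
            _ ≤ Bx^2*‖y‖^2 := mul_le_mul_of_nonneg_right h2 (by positivity)
          linarith
    
  have hP1 : ‖qPoch (x*y) q n‖ ≤ Real.exp (Bxy / (1 - ‖q‖)) := norm_qPoch_le _ _ _ hq hBxy n
  have hP2 : ‖qPoch y (q^2) n‖ ≤ Real.exp (By / (1 - ‖q^2‖)) := norm_qPoch_le _ _ _ hq2 hBy n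
  have hden : cq * ca ≤ ‖qPoch q q n * qPoch (x ^ 2 * y * q ^ 2) (q ^ 2) n‖ := by
    rw [norm_mul]
    exact mul_le_mul (hcq n) (hca n) hca0.le (le_trans hcq0.le (hcq n))
  rw [trm, norm_div]
  rw [norm_mul, norm_mul, norm_mul, norm_mul, norm_pow, norm_pow]
  have hnum : ‖x‖ ^ n * ‖q‖ ^ Nat.choose n 2 * ‖1 - x ^ 2 * y ^ 2 * q ^ (4 * n)‖ *
      ‖qPoch (x * y) q n‖ * ‖qPoch y (q ^ 2) n‖ ≤
      (‖x‖ ^ n * ‖q‖ ^ Nat.choose n 2) *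
        ((1 + Bx ^ 2 * ‖y‖ ^ 2) * Real.exp (Bxy / (1 - ‖q‖)) * Real.exp (By / (1 - ‖q ^ 2‖))) := by
    have e1 : (0:ℝ) ≤ ‖x‖ ^ n * ‖q‖ ^ Nat.choose n 2 :=
      mul_nonneg (pow_nonneg (norm_nonneg x) n) (pow_nonneg (norm_nonneg q) _)
    calc ‖x‖ ^ n * ‖q‖ ^ Nat.choose n 2 * ‖1 - x ^ 2 * y ^ 2 * q ^ (4 * n)‖ *
        ‖qPoch (x * y) q n‖ * ‖qPoch y (q ^ 2) n‖
        = (‖x‖ ^ n * ‖q‖ ^ Nat.choose n 2) *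
          (‖1 - x ^ 2 * y ^ 2 * q ^ (4 * n)‖ * ‖qPoch (x * y) q n‖ * ‖qPoch y (q ^ 2) n‖) := by
          ring
    _ ≤ (‖x‖ ^ n * ‖q‖ ^ Nat.choose n 2) *
          ((1 + Bx ^ 2 * ‖y‖ ^ 2) * Real.exp (Bxy / (1 - ‖q‖)) * Real.exp (By / (1 - ‖q ^ 2‖))) := by
          apply mul_le_mul_of_nonneg_left _ e1
          apply mul_le_mul
          apply mul_le_mul hB hP1 (norm_nonneg _) (by positivity)
          exact hP2
          exact norm_nonneg _
          positivity
  calc ‖x‖ ^ n * ‖q‖ ^ Nat.choose n 2 * ‖1 - x ^ 2 * y ^ 2 * q ^ (4 * n)‖ *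
        ‖qPoch (x * y) q n‖ * ‖qPoch y (q ^ 2) n‖ /
        ‖qPoch q q n * qPoch (x ^ 2 * y * q ^ 2) (q ^ 2) n‖
      ≤ (‖x‖ ^ n * ‖q‖ ^ Nat.choose n 2) *
        ((1 + Bx ^ 2 * ‖y‖ ^ 2) * Real.exp (Bxy / (1 - ‖q‖)) * Real.exp (By / (1 - ‖q ^ 2‖))) /
        (cq * ca) := by
        exact div_le_div₀ (by positivity) hnum (by positivity) hden
  _ = ((1 + Bx ^ 2 * ‖y‖ ^ 2) * Real.exp (Bxy / (1 - ‖q‖)) * Real.exp (By / (1 - ‖q ^ 2‖)) /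
        (cq * ca)) * (‖x‖ ^ n * ‖q‖ ^ Nat.choose n 2) := by ring

lemma summable_shape (r ρ : ℝ) (hr : 0 ≤ r) (hρ0 : 0 ≤ ρ) (hρ : ρ < 1) :
    Summable (fun n : ℕ => r ^ n * ρ ^ Nat.choose n 2) := by
  apply summable_of_ratio_norm_eventually_le (r := 1/2) (by norm_num)
  have hten : Tendsto (fun n : ℕ => r * ρ ^ n) atTop (𝓝 0) := by
    have := (tendsto_pow_atTop_nhds_zero_of_lt_one hρ0 hρ).const_mul r
    simpa using this
  filter_upwards [hten.eventually (eventually_le_nhds (by norm_num : (0:ℝ) < 1/2))] with n hn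
  have hrw : r ^ (n+1) * ρ ^ Nat.choose (n+1) 2 = (r * ρ ^ n) * (r ^ n * ρ ^ Nat.choose n 2) := by
    rw [choose_two_succ, pow_succ, pow_add]; ring
  rw [hrw, norm_mul]
  have h1 : ‖r * ρ ^ n‖ ≤ 1/2 := by
    rw [Real.norm_eq_abs, _root_.abs_of_nonneg (mul_nonneg hr (pow_nonneg hρ0 n))]; exact hn
  exact mul_le_mul_of_nonneg_right h1 (norm_nonneg _)

lemma summable_trm (q x y : ℂ) {cq ca : ℝ} (hq : ‖q‖ < 1)
    (hcq0 : 0 < cq) (hca0 : 0 < ca)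
    (hcq : ∀ m, cq ≤ ‖qPoch q q m‖)
    (hca : ∀ m, ca ≤ ‖qPoch (x ^ 2 * y * q ^ 2) (q ^ 2) m‖) :
    Summable (trm q x y) := by
  apply Summable.of_norm_bounded
    (g := fun n => ((1 + ‖x‖ ^ 2 * ‖y‖ ^ 2) * Real.exp (‖x * y‖ / (1 - ‖q‖)) *
      Real.exp (‖y‖ / (1 - ‖q ^ 2‖)) / (cq * ca)) * (‖x‖ ^ n * ‖q‖ ^ Nat.choose n 2))
  · exact (summable_shape _ _ (norm_nonneg x) (norm_nonneg q) hq).mul_left _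
  · exact fun n => norm_trm_le q x y hq hcq0 hca0 hcq hca le_rfl le_rfl le_rfl n

lemma norm_crt_le (q x y : ℂ) {cq ca : ℝ} (hq : ‖q‖ < 1)
    (hcq0 : 0 < cq) (hca0 : 0 < ca)
    (hcq : ∀ m, cq ≤ ‖qPoch q q m‖)
    (hca : ∀ m, ca ≤ ‖qPoch (x ^ 2 * y * q ^ 2) (q ^ 2) m‖) (n : ℕ) :
    ‖crt q x y n‖ ≤
      (2 * (1 + ‖x ^ 2 * y * q ^ 2‖) * (1 + ‖x * y * (1 - x * q ^ 2)‖ + ‖x ^ 3 * y ^ 2 * q ^ 2‖) *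
        (Real.exp (‖x * y‖ / (1 - ‖q‖)) * Real.exp (‖y‖ / (1 - ‖q ^ 2‖))) / (cq * ca)) *
      (‖x‖ ^ n * ‖q‖ ^ Nat.choose n 2) := by
  have hq2 : ‖q ^ 2‖ < 1 := by
    rw [norm_pow]
    calc ‖q‖ ^ 2 ≤ ‖q‖ * 1 := by nlinarith [norm_nonneg q]
    _ < 1 := by nlinarith [norm_nonneg q]
  have hqn : ∀ m : ℕ, ‖(q ^ n) ^ m‖ ≤ 1 := fun m => by
    rw [norm_pow, norm_pow]
    exact pow_le_one₀ (pow_nonneg (norm_nonneg q) n) (pow_le_one₀ (norm_nonneg q) hq.le)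
  have hmul : ∀ (z : ℂ) (m : ℕ), ‖z * (q ^ n) ^ m‖ ≤ ‖z‖ := fun z m => by
    rw [norm_mul]
    calc ‖z‖ * ‖(q ^ n) ^ m‖ ≤ ‖z‖ * 1 := mul_le_mul_of_nonneg_left (hqn m) (norm_nonneg z)
    _ = ‖z‖ := mul_one _
  have h1 : ‖1 - q ^ n‖ ≤ 2 := by
    have h1a : ‖q ^ n‖ ≤ 1 := by
      rw [norm_pow]; exact pow_le_one₀ (norm_nonneg q) hq.le
    calc ‖1 - q ^ n‖ ≤ ‖(1:ℂ)‖ + ‖q ^ n‖ := norm_sub_le _ _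
    _ ≤ 1 + 1 := by rw [norm_one]; linarith
    _ = 2 := by norm_num
  have h2 : ‖1 - x ^ 2 * y * q ^ 2‖ ≤ 1 + ‖x ^ 2 * y * q ^ 2‖ := by
    calc ‖1 - x ^ 2 * y * q ^ 2‖ ≤ ‖(1:ℂ)‖ + ‖x ^ 2 * y * q ^ 2‖ := norm_sub_le _ _
    _ = _ := by rw [norm_one]
  have h3 : ‖1 + x * y * (1 - x * q ^ 2) * (q ^ n) ^ 2 - x ^ 3 * y ^ 2 * q ^ 2 * (q ^ n) ^ 4‖ ≤
      1 + ‖x * y * (1 - x * q ^ 2)‖ + ‖x ^ 3 * y ^ 2 * q ^ 2‖ := by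
    calc ‖1 + x * y * (1 - x * q ^ 2) * (q ^ n) ^ 2 - x ^ 3 * y ^ 2 * q ^ 2 * (q ^ n) ^ 4‖
        ≤ ‖(1:ℂ) + x * y * (1 - x * q ^ 2) * (q ^ n) ^ 2‖ + ‖x ^ 3 * y ^ 2 * q ^ 2 * (q ^ n) ^ 4‖ :=
          norm_sub_le _ _
    _ ≤ ‖(1:ℂ)‖ + ‖x * y * (1 - x * q ^ 2) * (q ^ n) ^ 2‖ + ‖x ^ 3 * y ^ 2 * q ^ 2 * (q ^ n) ^ 4‖ := by
          have := norm_add_le (1:ℂ) (x * y * (1 - x * q ^ 2) * (q ^ n) ^ 2); linarith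
    _ ≤ 1 + ‖x * y * (1 - x * q ^ 2)‖ + ‖x ^ 3 * y ^ 2 * q ^ 2‖ := by
          rw [norm_one]
          have := hmul (x * y * (1 - x * q ^ 2)) 2
          have := hmul (x ^ 3 * y ^ 2 * q ^ 2) 4
          linarith
  have hP1 : ‖qPoch (x*y) q n‖ ≤ Real.exp (‖x*y‖ / (1 - ‖q‖)) := norm_qPoch_le _ _ _ hq le_rfl n
  have hP2 : ‖qPoch y (q^2) n‖ ≤ Real.exp (‖y‖ / (1 - ‖q^2‖)) := norm_qPoch_le _ _ _ hq2 le_rfl n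
  have hden : cq * ca ≤ ‖qPoch q q n * qPoch (x ^ 2 * y * q ^ 2) (q ^ 2) (n+1)‖ := by
    rw [norm_mul]
    exact mul_le_mul (hcq n) (hca (n+1)) hca0.le (le_trans hcq0.le (hcq n))
  have hN1 : ‖(1 - q ^ n) * (1 - x ^ 2 * y * q ^ 2) *
      (1 + x * y * (1 - x * q ^ 2) * (q ^ n) ^ 2 - x ^ 3 * y ^ 2 * q ^ 2 * (q ^ n) ^ 4)‖ ≤
      2 * (1 + ‖x ^ 2 * y * q ^ 2‖) * (1 + ‖x * y * (1 - x * q ^ 2)‖ + ‖x ^ 3 * y ^ 2 * q ^ 2‖) := by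
    rw [norm_mul, norm_mul]
    exact mul_le_mul (mul_le_mul h1 h2 (norm_nonneg _) (by norm_num)) h3 (norm_nonneg _)
      (by positivity)
  have hN2 : ‖x ^ n * q ^ Nat.choose n 2 * qPoch (x * y) q n * qPoch y (q ^ 2) n‖ ≤
      Real.exp (‖x * y‖ / (1 - ‖q‖)) * Real.exp (‖y‖ / (1 - ‖q ^ 2‖)) *
        (‖x‖ ^ n * ‖q‖ ^ Nat.choose n 2) := by
    rw [norm_mul, norm_mul, norm_mul, norm_pow, norm_pow]
    calc ‖x‖ ^ n * ‖q‖ ^ Nat.choose n 2 * ‖qPoch (x * y) q n‖ * ‖qPoch y (q ^ 2) n‖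
        = (‖qPoch (x * y) q n‖ * ‖qPoch y (q ^ 2) n‖) * (‖x‖ ^ n * ‖q‖ ^ Nat.choose n 2) := by ring
    _ ≤ (Real.exp (‖x * y‖ / (1 - ‖q‖)) * Real.exp (‖y‖ / (1 - ‖q ^ 2‖))) *
        (‖x‖ ^ n * ‖q‖ ^ Nat.choose n 2) := by
        apply mul_le_mul_of_nonneg_right
          (mul_le_mul hP1 hP2 (norm_nonneg _) (by positivity)) (by positivity)
    _ = _ := by ring
  have hcrt : ‖crt q x y n‖ = ‖(1 - q ^ n) * (1 - x ^ 2 * y * q ^ 2) *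
      (1 + x * y * (1 - x * q ^ 2) * (q ^ n) ^ 2 - x ^ 3 * y ^ 2 * q ^ 2 * (q ^ n) ^ 4)‖ *
      ‖x ^ n * q ^ Nat.choose n 2 * qPoch (x * y) q n * qPoch y (q ^ 2) n‖ /
      ‖qPoch q q n * qPoch (x ^ 2 * y * q ^ 2) (q ^ 2) (n + 1)‖ := by
    rw [crt, norm_div, norm_mul]
  rw [hcrt]
  calc ‖(1 - q ^ n) * (1 - x ^ 2 * y * q ^ 2) *
      (1 + x * y * (1 - x * q ^ 2) * (q ^ n) ^ 2 - x ^ 3 * y ^ 2 * q ^ 2 * (q ^ n) ^ 4)‖ *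
      ‖x ^ n * q ^ Nat.choose n 2 * qPoch (x * y) q n * qPoch y (q ^ 2) n‖ /
      ‖qPoch q q n * qPoch (x ^ 2 * y * q ^ 2) (q ^ 2) (n + 1)‖
      ≤ (2 * (1 + ‖x ^ 2 * y * q ^ 2‖) * (1 + ‖x * y * (1 - x * q ^ 2)‖ + ‖x ^ 3 * y ^ 2 * q ^ 2‖)) *
        (Real.exp (‖x * y‖ / (1 - ‖q‖)) * Real.exp (‖y‖ / (1 - ‖q ^ 2‖)) *
          (‖x‖ ^ n * ‖q‖ ^ Nat.choose n 2)) / (cq * ca) :=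
        div_le_div₀ (by positivity)
          (mul_le_mul hN1 hN2 (norm_nonneg _) (by positivity)) (by positivity) hden
  _ = _ := by ring

lemma summable_crt (q x y : ℂ) {cq ca : ℝ} (hq : ‖q‖ < 1)
    (hcq0 : 0 < cq) (hca0 : 0 < ca)
    (hcq : ∀ m, cq ≤ ‖qPoch q q m‖)
    (hca : ∀ m, ca ≤ ‖qPoch (x ^ 2 * y * q ^ 2) (q ^ 2) m‖) :
    Summable (crt q x y) := by
  apply Summable.of_norm_bounded
    ((summable_shape _ _ (norm_nonneg x) (norm_nonneg q) hq).mul_left _)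
    (fun n => norm_crt_le q x y hq hcq0 hca0 hcq hca n)

lemma exists_lb (a q : ℂ) (hq : ‖q‖ < 1) (h : ∀ k : ℕ, 1 - a * q ^ k ≠ 0) :
    ∃ c : ℝ, 0 < c ∧ ∀ n, c ≤ ‖qPoch a q n‖ := by
  have hpos : ∀ n, 0 < ‖qPoch a q n‖ := fun n =>
    norm_pos_iff.2 (qPoch_ne_zero a q n h)
  have hlim : Tendsto (fun n => ‖qPoch a q n‖) atTop (𝓝 ‖qPochInf a q‖) := by
    have := ((multipliable_qp a q hq).hasProd.tendsto_prod_nat).norm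
    exact this
  have hL : 0 < ‖qPochInf a q‖ := norm_pos_iff.2 (qPochInf_ne_zero a q hq h)
  obtain ⟨N, hN⟩ := Filter.eventually_atTop.mp
    (hlim.eventually (eventually_gt_nhds (by linarith : ‖qPochInf a q‖/2 < ‖qPochInf a q‖)))
  set c1 := (Finset.range (N+1)).inf' ⟨0, Finset.mem_range.2 (Nat.succ_pos N)⟩
    (fun n => ‖qPoch a q n‖) with hc1
  refine ⟨min c1 (‖qPochInf a q‖/2), ?_, ?_⟩
  · apply lt_min
    · rw [hc1]
      exact (Finset.lt_inf'_iff _).2 fun n _ => hpos n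
    · linarith
  · intro n
    rcases le_or_gt n N with hn | hn
    · exact le_trans (min_le_left _ _)
        (Finset.inf'_le _ (Finset.mem_range.2 (Nat.lt_succ_of_le hn)))
    · exact le_trans (min_le_right _ _) (hN n hn.le).le

set_option maxHeartbeats 1600000 in
lemma key_identity (q x y : ℂ) (hq : ‖q‖ < 1)
    (hd : ∀ k : ℕ, 1 - x ^ 2 * y * q ^ (2 * k + 2) ≠ 0) (n : ℕ) :
    (1 - x ^ 2 * y * q ^ 2) * trm q x y n - (1 + x) * (1 - x * y) * trm q (x * q) y n
      = crt q x y n - crt q x y (n + 1) := by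
  have hq2n : ∀ k : ℕ, x ^ 2 * y * q ^ 2 * (q ^ 2) ^ k = x ^ 2 * y * q ^ (2 * k + 2) := by
    intro k
    rw [← pow_mul]
    ring
  have hQ1 : qPoch q q n ≠ 0 := qPoch_ne_zero _ _ _ (fun k => factor_ne_zero q q hq hq k)
  have hQ2 : qPoch (x ^ 2 * y * q ^ 2) (q ^ 2) n ≠ 0 :=
    qPoch_ne_zero _ _ _ (fun k => by rw [hq2n k]; exact hd k)
  have ha0 : (1 : ℂ) - x ^ 2 * y * q ^ 2 ≠ 0 := by
    have := hd 0
    norm_num at this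
    exact this
  have hT2 : (1 : ℂ) - x ^ 2 * y * q ^ 2 * (q ^ n) ^ 2 ≠ 0 := by
    rw [show ((q:ℂ) ^ n) ^ 2 = (q ^ 2) ^ n by rw [← pow_mul, ← pow_mul, mul_comm], hq2n n]
    exact hd n
  have hT4 : (1 : ℂ) - x ^ 2 * y * q ^ 2 * ((q ^ n) ^ 2 * q ^ 2) ≠ 0 := by
    rw [show ((q:ℂ) ^ n) ^ 2 * q ^ 2 = (q ^ 2) ^ (n + 1) by ring, hq2n (n+1)]
    exact hd (n+1)
  have hq1n : (1 : ℂ) - q * q ^ n ≠ 0 := factor_ne_zero q q hq hq n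
  have hshxy : (1 - x*y) * qPoch (x*y*q) q n = qPoch (x*y) q n * (1 - x*y*q^n) := by
    have h := qPoch_shift (x*y) q n
    rw [qPoch_succ] at h
    linear_combination -h
  have hsh2 : (1 - x^2*y*q^2) * qPoch (x^2*y*q^2*q^2) (q^2) n
      = qPoch (x^2*y*q^2) (q^2) n * (1 - x^2*y*q^2*(q^n)^2) := by
    have h := qPoch_shift (x^2*y*q^2) (q^2) n
    rw [qPoch_succ] at h
    rw [show ((q:ℂ)^2)^n = (q^n)^2 by rw [← pow_mul, ← pow_mul, mul_comm]] at h
    linear_combination -h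
  have hZ2 : qPoch (x^2*y*q^2*q^2) (q^2) n ≠ 0 := by
    intro h0
    rw [h0, mul_zero] at hsh2
    exact (mul_ne_zero hQ2 hT2) hsh2.symm
  have hD : qPoch q q n * qPoch (x ^ 2 * y * q ^ 2) (q ^ 2) n * (1 - q * q ^ n) *
      (1 - x ^ 2 * y * q ^ 2 * (q ^ n) ^ 2) *
      (1 - x ^ 2 * y * q ^ 2 * ((q ^ n) ^ 2 * q ^ 2)) ≠ 0 :=
    mul_ne_zero (mul_ne_zero (mul_ne_zero (mul_ne_zero hQ1 hQ2) hq1n) hT2) hT4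
  have H1 : (1 - x ^ 2 * y * q ^ 2) * trm q x y n =
      ((1 - x ^ 2 * y * q ^ 2) *
        (x ^ n * q ^ Nat.choose n 2 * (1 - x ^ 2 * y ^ 2 * (q ^ n) ^ 4) *
          qPoch (x * y) q n * qPoch y (q ^ 2) n) *
        ((1 - q * q ^ n) * (1 - x ^ 2 * y * q ^ 2 * (q ^ n) ^ 2) *
          (1 - x ^ 2 * y * q ^ 2 * ((q ^ n) ^ 2 * q ^ 2)))) /
      (qPoch q q n * qPoch (x ^ 2 * y * q ^ 2) (q ^ 2) n * (1 - q * q ^ n) *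
        (1 - x ^ 2 * y * q ^ 2 * (q ^ n) ^ 2) *
        (1 - x ^ 2 * y * q ^ 2 * ((q ^ n) ^ 2 * q ^ 2))) := by
    rw [trm]
    rw [show (q:ℂ)^(4*n) = (q^n)^4 by rw [← pow_mul, mul_comm]]
    rw [← mul_div_assoc]
    rw [div_eq_div_iff (mul_ne_zero hQ1 hQ2) hD]
    ring
  have H2 : (1 + x) * (1 - x * y) * trm q (x * q) y n =
      ((1 + x) * (1 - x ^ 2 * y * q ^ 2) * (x ^ n * q ^ n * q ^ Nat.choose n 2) *
        (1 - x ^ 2 * y ^ 2 * q ^ 2 * (q ^ n) ^ 4) *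
        (qPoch (x * y) q n * (1 - x * y * q ^ n)) * qPoch y (q ^ 2) n *
        ((1 - q * q ^ n) * (1 - x ^ 2 * y * q ^ 2 * ((q ^ n) ^ 2 * q ^ 2)))) /
      (qPoch q q n * qPoch (x ^ 2 * y * q ^ 2) (q ^ 2) n * (1 - q * q ^ n) *
        (1 - x ^ 2 * y * q ^ 2 * (q ^ n) ^ 2) *
        (1 - x ^ 2 * y * q ^ 2 * ((q ^ n) ^ 2 * q ^ 2))) := by
    rw [trm]
    rw [show x*q*y = x*y*q by ring]
    rw [show (x*q)^2*y*q^2 = x^2*y*q^2*q^2 by ring]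
    rw [mul_pow x q n]
    rw [show (q:ℂ)^(4*n) = (q^n)^4 by rw [← pow_mul, mul_comm]]
    rw [← mul_div_assoc]
    rw [div_eq_div_iff (mul_ne_zero hQ1 hZ2) hD]
    linear_combination
      ((1 + x) * (x ^ n * q ^ n * q ^ Nat.choose n 2) * (1 - (x*q) ^ 2 * y ^ 2 * (q ^ n) ^ 4) *
        qPoch y (q^2) n *
        (qPoch q q n * qPoch (x ^ 2 * y * q ^ 2) (q ^ 2) n * (1 - q * q ^ n) *
          (1 - x ^ 2 * y * q ^ 2 * (q ^ n) ^ 2) *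
          (1 - x ^ 2 * y * q ^ 2 * ((q ^ n) ^ 2 * q ^ 2)))) * hshxy -
      ((1 + x) * (x ^ n * q ^ n * q ^ Nat.choose n 2) * (1 - x^2*y^2*q^2*(q^n)^4) *
        qPoch y (q^2) n * (1 - q*q^n) * (1 - x^2*y*q^2*((q^n)^2*q^2)) *
        qPoch (x*y) q n * (1 - x*y*q^n) * qPoch q q n) * hsh2
  have H3 : crt q x y n =
      ((1 - q ^ n) * (1 - x ^ 2 * y * q ^ 2) *
        (1 + x * y * (1 - x * q ^ 2) * (q ^ n) ^ 2 - x ^ 3 * y ^ 2 * q ^ 2 * (q ^ n) ^ 4) *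
        (x ^ n * q ^ Nat.choose n 2 * qPoch (x * y) q n * qPoch y (q ^ 2) n) *
        ((1 - q * q ^ n) * (1 - x ^ 2 * y * q ^ 2 * ((q ^ n) ^ 2 * q ^ 2)))) /
      (qPoch q q n * qPoch (x ^ 2 * y * q ^ 2) (q ^ 2) n * (1 - q * q ^ n) *
        (1 - x ^ 2 * y * q ^ 2 * (q ^ n) ^ 2) *
        (1 - x ^ 2 * y * q ^ 2 * ((q ^ n) ^ 2 * q ^ 2))) := by
    rw [crt]
    rw [qPoch_succ (x^2*y*q^2) (q^2) n]
    rw [show ((q:ℂ)^2)^n = (q^n)^2 by rw [← pow_mul, ← pow_mul, mul_comm]]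
    rw [div_eq_div_iff (by exact mul_ne_zero hQ1 (mul_ne_zero hQ2 hT2)) hD]
    ring
  have H4 : crt q x y (n + 1) =
      ((1 - q ^ n * q) * (1 - x ^ 2 * y * q ^ 2) *
        (1 + x * y * (1 - x * q ^ 2) * (q ^ n * q) ^ 2 - x ^ 3 * y ^ 2 * q ^ 2 * (q ^ n * q) ^ 4) *
        (x ^ n * x * (q ^ Nat.choose n 2 * q ^ n) * (qPoch (x * y) q n * (1 - x * y * q ^ n)) *
          (qPoch y (q ^ 2) n * (1 - y * (q ^ n) ^ 2)))) /
      (qPoch q q n * qPoch (x ^ 2 * y * q ^ 2) (q ^ 2) n * (1 - q * q ^ n) *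
        (1 - x ^ 2 * y * q ^ 2 * (q ^ n) ^ 2) *
        (1 - x ^ 2 * y * q ^ 2 * ((q ^ n) ^ 2 * q ^ 2))) := by
    rw [crt]
    rw [qPoch_succ (x*y) q n, qPoch_succ y (q^2) n, qPoch_succ q q n,
      qPoch_succ (x^2*y*q^2) (q^2) (n+1), qPoch_succ (x^2*y*q^2) (q^2) n]
    rw [choose_two_succ, pow_add q (Nat.choose n 2) n]
    rw [show ((q:ℂ)^2)^(n+1) = (q^n)^2*q^2 by ring]
    rw [show ((q:ℂ)^2)^n = (q^n)^2 by rw [← pow_mul, ← pow_mul, mul_comm]]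
    rw [pow_succ q n, pow_succ x n]
    rw [div_eq_div_iff (by
      exact mul_ne_zero (mul_ne_zero hQ1 hq1n)
        (mul_ne_zero (mul_ne_zero hQ2 hT2) hT4)) hD]
    ring
  rw [H1, H2, H3, H4, div_sub_div_same, div_sub_div_same]
  congr 1
  ring

lemma norm_q2_lt_one {q : ℂ} (hq : ‖q‖ < 1) : ‖q ^ 2‖ < 1 := by
  rw [norm_pow]
  calc ‖q‖ ^ 2 ≤ ‖q‖ * 1 := by nlinarith [norm_nonneg q]
  _ < 1 := by nlinarith [norm_nonneg q]

lemma func_eq (q x y : ℂ) (hq : ‖q‖ < 1)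
    (hd : ∀ k : ℕ, 1 - x ^ 2 * y * q ^ (2 * k + 2) ≠ 0) :
    (1 - x ^ 2 * y * q ^ 2) * ∑' n, trm q x y n
      = (1 + x) * (1 - x * y) * ∑' n, trm q (x * q) y n := by
  have hq2 : ‖q ^ 2‖ < 1 := norm_q2_lt_one hq
  have hq2n : ∀ k : ℕ, x ^ 2 * y * q ^ 2 * (q ^ 2) ^ k = x ^ 2 * y * q ^ (2 * k + 2) := by
    intro k
    rw [← pow_mul]; ring
  obtain ⟨cq, hcq0, hcq⟩ := exists_lb q q hq (fun k => factor_ne_zero q q hq hq k)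
  obtain ⟨ca, hca0, hca⟩ := exists_lb (x ^ 2 * y * q ^ 2) (q ^ 2) hq2
    (fun k => by rw [hq2n k]; exact hd k)
  obtain ⟨cb, hcb0, hcb⟩ := exists_lb ((x * q) ^ 2 * y * q ^ 2) (q ^ 2) hq2
    (fun k => by
      rw [show (x*q)^2*y*q^2*(q^2)^k = x^2*y*q^(2*(k+1)+2) by rw [← pow_mul]; ring]
      exact hd (k+1))
  have hs1 : Summable (trm q x y) := summable_trm q x y hq hcq0 hca0 hcq hca
  have hs2 : Summable (trm q (x * q) y) := summable_trm q (x*q) y hq hcq0 hcb0 hcq hcb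
  have hs3 : Summable (crt q x y) := summable_crt q x y hq hcq0 hca0 hcq hca
  have hs3' : Summable (fun n => crt q x y (n + 1)) := by
    rw [summable_nat_add_iff 1]
    exact hs3
  have htel : ∑' n : ℕ, (crt q x y n - crt q x y (n + 1)) = crt q x y 0 := by
    rw [Summable.tsum_sub hs3 hs3']
    have h2 := Summable.tsum_eq_zero_add hs3
    linear_combination h2
  have hcrt0 : crt q x y 0 = 0 := by
    rw [crt]; simp
  have hL : Summable (fun n => (1 - x ^ 2 * y * q ^ 2) * trm q x y n) := hs1.mul_left _
  have hR : Summable (fun n => (1 + x) * (1 - x * y) * trm q (x * q) y n) := hs2.mul_left _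
  have h5 : ∑' n : ℕ, ((1 - x ^ 2 * y * q ^ 2) * trm q x y n
      - (1 + x) * (1 - x * y) * trm q (x * q) y n) = 0 := by
    calc ∑' n : ℕ, ((1 - x ^ 2 * y * q ^ 2) * trm q x y n
        - (1 + x) * (1 - x * y) * trm q (x * q) y n)
        = ∑' n : ℕ, (crt q x y n - crt q x y (n + 1)) :=
          tsum_congr (fun n => key_identity q x y hq hd n)
    _ = crt q x y 0 := htel
    _ = 0 := hcrt0
  rw [Summable.tsum_sub hL hR, tsum_mul_left, tsum_mul_left] at h5
  linear_combination h5

lemma F_tendsto_one (q x y : ℂ) (hq : ‖q‖ < 1)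
    (hd : ∀ m k : ℕ, 1 - (x * q ^ m) ^ 2 * y * q ^ (2 * k + 2) ≠ 0) :
    Tendsto (fun m : ℕ => ∑' n : ℕ, trm q (x * q ^ m) y n) atTop (𝓝 1) := by
  have hq2 : ‖q ^ 2‖ < 1 := norm_q2_lt_one hq
  obtain ⟨cq, hcq0, hcq⟩ := exists_lb q q hq (fun k => factor_ne_zero q q hq hq k)
  have hsm : ∀ᶠ m in atTop, ‖x ^ 2 * y * q ^ 2 * (q ^ 2) ^ m‖ ≤ (1 - ‖q ^ 2‖) / 2 :=
    (norm_mul_pow_tendsto _ _ hq2).eventually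
      (eventually_le_nhds (by linarith : (0:ℝ) < (1 - ‖q ^ 2‖) / 2))
  set K : ℝ := (1 + ‖x‖ ^ 2 * ‖y‖ ^ 2) * Real.exp (‖x * y‖ / (1 - ‖q‖)) *
    Real.exp (‖y‖ / (1 - ‖q ^ 2‖)) / (cq * (1 / 2)) with hK
  have hK0 : 0 ≤ K := by rw [hK]; positivity
  have hgsum : Summable (fun n : ℕ => K * (‖x‖ ^ (n+1) * ‖q‖ ^ Nat.choose n 2)) := by
    have h := (summable_shape ‖x‖ ‖q‖ (norm_nonneg x) (norm_nonneg q) hq).mul_left (K * ‖x‖)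
    apply h.congr
    intro n
    rw [pow_succ]
    ring
  have hbound : ∀ᶠ m in atTop, ‖(∑' n : ℕ, trm q (x * q ^ m) y n) - 1‖ ≤
      (‖x‖ ^ 2 * ‖y‖ ^ 2 + ∑' n : ℕ, K * (‖x‖ ^ (n+1) * ‖q‖ ^ Nat.choose n 2)) * ‖q‖ ^ m := by
    filter_upwards [hsm] with m hm
    have hqm1 : ‖q‖ ^ m ≤ 1 := pow_le_one₀ (norm_nonneg q) hq.le
    have hargm : (x * q ^ m) ^ 2 * y * q ^ 2 = x ^ 2 * y * q ^ 2 * (q ^ 2) ^ m := by ring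
    have hca : ∀ j, (1:ℝ)/2 ≤ ‖qPoch ((x * q ^ m) ^ 2 * y * q ^ 2) (q ^ 2) j‖ := fun j => by
      rw [hargm]
      exact norm_qPoch_ge _ _ hq2 hm j
    have hs : Summable (trm q (x * q ^ m) y) :=
      summable_trm q (x * q ^ m) y hq hcq0 (by norm_num) hcq hca
    have hs' : Summable (fun n => trm q (x * q ^ m) y (n + 1)) := by
      rw [summable_nat_add_iff 1]; exact hs
    have hBx : ‖x * q ^ m‖ ≤ ‖x‖ := by
      rw [norm_mul, norm_pow]
      calc ‖x‖ * ‖q‖ ^ m ≤ ‖x‖ * 1 := mul_le_mul_of_nonneg_left hqm1 (norm_nonneg x)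
      _ = ‖x‖ := mul_one _
    have hBxy : ‖x * q ^ m * y‖ ≤ ‖x * y‖ := by
      rw [show x * q ^ m * y = x * y * q ^ m by ring, norm_mul, norm_pow]
      calc ‖x * y‖ * ‖q‖ ^ m ≤ ‖x * y‖ * 1 := mul_le_mul_of_nonneg_left hqm1 (norm_nonneg _)
      _ = ‖x * y‖ := mul_one _
    have htrm0 : trm q (x * q ^ m) y 0 = 1 - (x * q ^ m) ^ 2 * y ^ 2 := by
      rw [trm, qPoch, qPoch, qPoch, qPoch]
      simp
    have hnorm1 : ‖trm q (x * q ^ m) y 0 - 1‖ ≤ ‖x‖ ^ 2 * ‖y‖ ^ 2 * ‖q‖ ^ m := by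
      rw [htrm0, show (1 : ℂ) - (x * q ^ m) ^ 2 * y ^ 2 - 1 = -((x * q ^ m) ^ 2 * y ^ 2) by ring,
        norm_neg, norm_mul, norm_pow, norm_mul, norm_pow, norm_pow]
      have e : (‖x‖ * ‖q‖ ^ m) ^ 2 = ‖x‖ ^ 2 * (‖q‖ ^ m) ^ 2 := by ring
      rw [e]
      have e2 : (‖q‖ ^ m) ^ 2 ≤ ‖q‖ ^ m := by
        nlinarith [pow_nonneg (norm_nonneg q) m]
      nlinarith [norm_nonneg x, norm_nonneg y, pow_nonneg (norm_nonneg x) 2,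
        pow_nonneg (norm_nonneg y) 2, pow_nonneg (norm_nonneg q) m,
        mul_nonneg (pow_nonneg (norm_nonneg x) 2) (pow_nonneg (norm_nonneg y) 2)]
    have htail : ∀ n : ℕ, ‖trm q (x * q ^ m) y (n + 1)‖ ≤
        K * (‖x‖ ^ (n+1) * ‖q‖ ^ Nat.choose n 2) * ‖q‖ ^ m := by
      intro n
      have h := norm_trm_le q (x * q ^ m) y hq hcq0 (by norm_num : (0:ℝ) < 1/2) hcq hca
        hBx hBxy le_rfl (n + 1)
      rw [← hK] at h
      refine h.trans ?_
      have e1 : ‖x * q ^ m‖ ^ (n+1) ≤ ‖x‖ ^ (n+1) * ‖q‖ ^ m := by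
        rw [norm_mul, norm_pow, mul_pow]
        have e1a : (‖q‖ ^ m) ^ (n+1) ≤ (‖q‖ ^ m) ^ 1 :=
          pow_le_pow_of_le_one (pow_nonneg (norm_nonneg q) m) hqm1 (Nat.le_add_left 1 n)
        rw [pow_one] at e1a
        exact mul_le_mul_of_nonneg_left e1a (pow_nonneg (norm_nonneg x) _)
      have e2 : ‖q‖ ^ Nat.choose (n+1) 2 ≤ ‖q‖ ^ Nat.choose n 2 :=
        pow_le_pow_of_le_one (norm_nonneg q) hq.le (Nat.choose_le_choose 2 (Nat.le_succ n))
      calc K * (‖x * q ^ m‖ ^ (n+1) * ‖q‖ ^ Nat.choose (n+1) 2)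
          ≤ K * ((‖x‖ ^ (n+1) * ‖q‖ ^ m) * ‖q‖ ^ Nat.choose n 2) := by
            apply mul_le_mul_of_nonneg_left _ hK0
            exact mul_le_mul e1 e2 (pow_nonneg (norm_nonneg q) _)
              (mul_nonneg (pow_nonneg (norm_nonneg x) _) (pow_nonneg (norm_nonneg q) _))
      _ = K * (‖x‖ ^ (n+1) * ‖q‖ ^ Nat.choose n 2) * ‖q‖ ^ m := by ring
    have hsplit := Summable.tsum_eq_zero_add hs
    have hrw : (∑' n : ℕ, trm q (x * q ^ m) y n) - 1 =
        (trm q (x * q ^ m) y 0 - 1) + ∑' n : ℕ, trm q (x * q ^ m) y (n + 1) := by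
      rw [hsplit]; ring
    rw [hrw]
    calc ‖(trm q (x * q ^ m) y 0 - 1) + ∑' n : ℕ, trm q (x * q ^ m) y (n + 1)‖
        ≤ ‖trm q (x * q ^ m) y 0 - 1‖ + ‖∑' n : ℕ, trm q (x * q ^ m) y (n + 1)‖ :=
          norm_add_le _ _
    _ ≤ ‖x‖ ^ 2 * ‖y‖ ^ 2 * ‖q‖ ^ m + ∑' n : ℕ, ‖trm q (x * q ^ m) y (n + 1)‖ :=
          add_le_add hnorm1 (norm_tsum_le_tsum_norm hs'.norm)
    _ ≤ ‖x‖ ^ 2 * ‖y‖ ^ 2 * ‖q‖ ^ m +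
          ∑' n : ℕ, K * (‖x‖ ^ (n+1) * ‖q‖ ^ Nat.choose n 2) * ‖q‖ ^ m := by
          apply add_le_add_right
          exact Summable.tsum_le_tsum htail hs'.norm (hgsum.mul_right _)
    _ = (‖x‖ ^ 2 * ‖y‖ ^ 2 + ∑' n : ℕ, K * (‖x‖ ^ (n+1) * ‖q‖ ^ Nat.choose n 2)) * ‖q‖ ^ m := by
          rw [tsum_mul_right]; ring
  rw [tendsto_iff_norm_sub_tendsto_zero]
  apply squeeze_zero' (Eventually.of_forall fun m => norm_nonneg _) hbound
  have := (tendsto_pow_atTop_nhds_zero_of_lt_one (norm_nonneg q) hq).const_mul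
    (‖x‖ ^ 2 * ‖y‖ ^ 2 + ∑' n : ℕ, K * (‖x‖ ^ (n+1) * ‖q‖ ^ Nat.choose n 2))
  simpa using this

set_option maxHeartbeats 800000 in
/-- **Theorem 2.1** (a trivariate identity):
`(−x;q)_∞ (xy;q)_∞ / (x²yq²;q²)_∞
  = Σ_{n≥0} xⁿ q^{C(n,2)} (1 − x²y²q^{4n}) (xy;q)_n (y;q²)_n / ((q;q)_n (x²yq²;q²)_n)`. -/
theorem trivariate_single_sum (q x y : ℂ) (hq : ‖q‖ < 1)
    (hxy : ∀ n : ℕ, x ^ 2 * y * q ^ (2 * n + 2) ≠ 1) (hx : x ≠ 1) :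
    qPochInf (-x) q * qPochInf (x * y) q / qPochInf (x ^ 2 * y * q ^ 2) (q ^ 2) =
      ∑' n : ℕ,
        x ^ n * q ^ Nat.choose n 2 * (1 - x ^ 2 * y ^ 2 * q ^ (4 * n)) *
          qPoch (x * y) q n * qPoch y (q ^ 2) n /
          (qPoch q q n * qPoch (x ^ 2 * y * q ^ 2) (q ^ 2) n) := by
  have hq2 : ‖q ^ 2‖ < 1 := norm_q2_lt_one hq
  have hd : ∀ m k : ℕ, 1 - (x * q ^ m) ^ 2 * y * q ^ (2 * k + 2) ≠ 0 := by
    intro m k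
    rw [sub_ne_zero]
    intro h
    apply hxy (m + k)
    rw [show x ^ 2 * y * q ^ (2 * (m + k) + 2) = (x * q ^ m) ^ 2 * y * q ^ (2 * k + 2) by ring]
    exact h.symm
  have hd0 : ∀ k : ℕ, 1 - x ^ 2 * y * q ^ (2 * k + 2) ≠ 0 := by
    intro k
    have := hd 0 k
    simpa using this
  have hq2n : ∀ k : ℕ, x ^ 2 * y * q ^ 2 * (q ^ 2) ^ k = x ^ 2 * y * q ^ (2 * k + 2) := by
    intro k
    rw [← pow_mul]; ring
  have hxq : ∀ m : ℕ, (x * q ^ m) * q = x * q ^ (m + 1) := by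
    intro m
    rw [pow_succ]; ring
  have hFE' : ∀ m : ℕ, (1 - (x * q ^ m) ^ 2 * y * q ^ 2) * ∑' n : ℕ, trm q (x * q ^ m) y n
      = (1 + x * q ^ m) * (1 - (x * q ^ m) * y) * ∑' n : ℕ, trm q (x * q ^ (m + 1)) y n := by
    intro m
    have h := func_eq q (x * q ^ m) y hq (hd m)
    rwa [hxq m] at h
  have hP3' : ∀ m : ℕ, qPochInf ((x * q ^ m) ^ 2 * y * q ^ 2) (q ^ 2)
      = (1 - (x * q ^ m) ^ 2 * y * q ^ 2) * qPochInf ((x * q ^ (m + 1)) ^ 2 * y * q ^ 2) (q ^ 2) := by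
    intro m
    have h := qPochInf_shift ((x * q ^ m) ^ 2 * y * q ^ 2) (q ^ 2) hq2
    rw [show (x * q ^ m) ^ 2 * y * q ^ 2 * q ^ 2 = ((x * q ^ m) * q) ^ 2 * y * q ^ 2 by ring,
      hxq m] at h
    exact h
  have hH' : ∀ m : ℕ, qPochInf (-(x * q ^ m)) q * qPochInf ((x * q ^ m) * y) q
      = (1 + x * q ^ m) * (1 - (x * q ^ m) * y) *
        (qPochInf (-(x * q ^ (m + 1))) q * qPochInf ((x * q ^ (m + 1)) * y) q) := by
    intro m
    have h1 := qPochInf_shift (-(x * q ^ m)) q hq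
    rw [show (1 : ℂ) - -(x * q ^ m) = 1 + x * q ^ m by ring,
      show -(x * q ^ m) * q = -(x * q ^ (m + 1)) by rw [pow_succ]; ring] at h1
    have h2 := qPochInf_shift ((x * q ^ m) * y) q hq
    rw [show (x * q ^ m) * y * q = (x * q ^ (m + 1)) * y by rw [pow_succ]; ring] at h2
    rw [h1, h2]; ring
  have hgstep : ∀ m : ℕ,
      qPochInf ((x * q ^ m) ^ 2 * y * q ^ 2) (q ^ 2) * ∑' n : ℕ, trm q (x * q ^ m) y n
      = (1 + x * q ^ m) * (1 - (x * q ^ m) * y) *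
        (qPochInf ((x * q ^ (m + 1)) ^ 2 * y * q ^ 2) (q ^ 2) *
          ∑' n : ℕ, trm q (x * q ^ (m + 1)) y n) := by
    intro m
    linear_combination (∑' n : ℕ, trm q (x * q ^ m) y n) * hP3' m +
      (qPochInf ((x * q ^ (m + 1)) ^ 2 * y * q ^ 2) (q ^ 2)) * hFE' m
  have hind : ∀ m : ℕ,
      qPochInf (x ^ 2 * y * q ^ 2) (q ^ 2) * (∑' n : ℕ, trm q x y n)
        - qPochInf (-x) q * qPochInf (x * y) q
      = (qPoch (-x) q m * qPoch (x * y) q m) *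
        (qPochInf ((x * q ^ m) ^ 2 * y * q ^ 2) (q ^ 2) * (∑' n : ℕ, trm q (x * q ^ m) y n)
          - qPochInf (-(x * q ^ m)) q * qPochInf ((x * q ^ m) * y) q) := by
    intro m
    induction m with
    | zero => simp [qPoch]
    | succ k ih =>
      rw [ih, qPoch_succ (-x) q k, qPoch_succ (x * y) q k]
      linear_combination (qPoch (-x) q k * qPoch (x * y) q k) * hgstep k -
        (qPoch (-x) q k * qPoch (x * y) q k) * hH' k
  have hFlim := F_tendsto_one q x y hq hd
  have hP3lim : Tendsto (fun m : ℕ => qPochInf ((x * q ^ m) ^ 2 * y * q ^ 2) (q ^ 2)) atTop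
      (𝓝 1) := by
    have h := qPochInf_tendsto_one (x ^ 2 * y * q ^ 2) (q ^ 2) hq2
    apply h.congr
    intro m
    congr 1
    ring
  have hHlim : Tendsto (fun m : ℕ => qPochInf (-(x * q ^ m)) q * qPochInf ((x * q ^ m) * y) q)
      atTop (𝓝 1) := by
    have l1 := (qPochInf_tendsto_one (-x) q hq).congr
      (fun m : ℕ => by congr 1; ring : ∀ m : ℕ,
        qPochInf (-x * q ^ m) q = qPochInf (-(x * q ^ m)) q)
    have l2 := (qPochInf_tendsto_one (x * y) q hq).congr
      (fun m : ℕ => by congr 1; ring : ∀ m : ℕ,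
        qPochInf (x * y * q ^ m) q = qPochInf ((x * q ^ m) * y) q)
    have := l1.mul l2
    simpa using this
  have hdiff : Tendsto (fun m : ℕ =>
      qPochInf ((x * q ^ m) ^ 2 * y * q ^ 2) (q ^ 2) * (∑' n : ℕ, trm q (x * q ^ m) y n)
        - qPochInf (-(x * q ^ m)) q * qPochInf ((x * q ^ m) * y) q) atTop (𝓝 0) := by
    have := (hP3lim.mul hFlim).sub hHlim
    simpa using this
  set C : ℝ := Real.exp (‖x‖ / (1 - ‖q‖)) * Real.exp (‖x * y‖ / (1 - ‖q‖)) with hC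
  have hCb : ∀ m : ℕ, ‖qPoch (-x) q m * qPoch (x * y) q m‖ ≤ C := by
    intro m
    rw [norm_mul, hC]
    exact mul_le_mul (norm_qPoch_le (-x) q ‖x‖ hq (by rw [norm_neg]) m)
      (norm_qPoch_le (x * y) q ‖x * y‖ hq le_rfl m) (norm_nonneg _) (Real.exp_pos _).le
  have hfinal : qPochInf (x ^ 2 * y * q ^ 2) (q ^ 2) * (∑' n : ℕ, trm q x y n)
      = qPochInf (-x) q * qPochInf (x * y) q := by
    have hb : ∀ m : ℕ, ‖qPochInf (x ^ 2 * y * q ^ 2) (q ^ 2) * (∑' n : ℕ, trm q x y n)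
        - qPochInf (-x) q * qPochInf (x * y) q‖ ≤
        C * ‖qPochInf ((x * q ^ m) ^ 2 * y * q ^ 2) (q ^ 2) *
          (∑' n : ℕ, trm q (x * q ^ m) y n)
          - qPochInf (-(x * q ^ m)) q * qPochInf ((x * q ^ m) * y) q‖ := by
      intro m
      rw [hind m, norm_mul]
      exact mul_le_mul_of_nonneg_right (hCb m) (norm_nonneg _)
    have h0 : Tendsto (fun m : ℕ => C *
        ‖qPochInf ((x * q ^ m) ^ 2 * y * q ^ 2) (q ^ 2) * (∑' n : ℕ, trm q (x * q ^ m) y n)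
          - qPochInf (-(x * q ^ m)) q * qPochInf ((x * q ^ m) * y) q‖) atTop (𝓝 0) := by
      have := hdiff.norm.const_mul C
      simpa using this
    have hle : ‖qPochInf (x ^ 2 * y * q ^ 2) (q ^ 2) * (∑' n : ℕ, trm q x y n)
        - qPochInf (-x) q * qPochInf (x * y) q‖ ≤ 0 := ge_of_tendsto' h0 hb
    have := norm_le_zero_iff.1 hle
    exact sub_eq_zero.1 this
  have hP3ne : qPochInf (x ^ 2 * y * q ^ 2) (q ^ 2) ≠ 0 :=
    qPochInf_ne_zero _ _ hq2 (fun k => by rw [hq2n k]; exact hd0 k)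
  rw [div_eq_iff hP3ne]
  show qPochInf (-x) q * qPochInf (x * y) q
      = (∑' n : ℕ, trm q x y n) * qPochInf (x ^ 2 * y * q ^ 2) (q ^ 2)
  linear_combination -hfinal
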